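/- arXiv:math/0512019 — 2 statements merged into one kernel-verified Lean document; each statement's English description precedes it below -/
import Mathlib

section
/- Let F be a finite family of nonempty sets such that for any two distinct A, B ∈ F there is at most one set in F disjoint from both A and B. Then cd_2(F) ≤ 3. -/
open Finset

/-- The general Kneser graph of a finite set system: vertices are the members
of the family, two sets adjacent iff they are disjoint (and distinct). -/
def kneserGraph {α : Type*} [DecidableEq α] (𝓕 : Finset (Finset α)) :
    SimpleGraph {F // F ∈ 𝓕} where
  Adj A B := A ≠ B ∧ Disjoint (A : Finset α) (B : Finset α)
  symm := by
    refine ⟨?_⟩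
    intro A B hAB
    exact ⟨hAB.1.symm, hAB.2.symm⟩
  loopless := ⟨fun A hA => hA.1 rfl⟩

/-- The 2-colorability defect of a finite set system: the minimum number of
points to delete so that the sets avoiding the deleted points can be 2-colored
with no set monochromatic. -/
noncomputable def cdTwo {α : Type*} [DecidableEq α] (𝓕 : Finset (Finset α)) : ℕ :=
  sInf {k | ∃ Y : Finset α, Y.card = k ∧ ∃ c : α → Fin 2,
    ∀ F ∈ 𝓕, Disjoint F Y → (∃ a ∈ F, c a = 0) ∧ (∃ b ∈ F, c b = 1)}

/-- Core combinatorial lemma: for two cross-intersecting families `P`, `Q` of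
nonempty subsets of a finite ground set `U`, one can find `T ⊆ U` and at most
one extra "kill point" `s` such that every member of `Q` has a point outside
`T`, while every member of `P` either meets `s` or meets `T`. -/
lemma coreLemma {α : Type*} [DecidableEq α] (U : Finset α) (P Q : Finset (Finset α))
    (hPU : ∀ p ∈ P, p ⊆ U) (hPne : ∀ p ∈ P, p.Nonempty) (hQne : ∀ q ∈ Q, q.Nonempty)
    (cross : ∀ p ∈ P, ∀ q ∈ Q, ¬ Disjoint p q) :
    ∃ T : Finset α, T ⊆ U ∧ ∃ s : Finset α, s.card ≤ 1 ∧
      (∀ q ∈ Q, (q \ T).Nonempty) ∧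
      (∀ p ∈ P, (p ∩ s).Nonempty ∨ (p ∩ T).Nonempty) := by
  classical
  have hempty : (∅ : Finset α) ∈ U.powerset.filter (fun T => ∀ q ∈ Q, ¬ q ⊆ T) := by
    simp only [mem_filter, mem_powerset]
    exact ⟨empty_subset U, fun q hq hsub => (hQne q hq).ne_empty (subset_empty.mp hsub)⟩
  obtain ⟨T, hT𝒯, hTmax⟩ :=
    (U.powerset.filter (fun T => ∀ q ∈ Q, ¬ q ⊆ T)).exists_max_image card ⟨∅, hempty⟩
  rw [mem_filter, mem_powerset] at hT𝒯
  obtain ⟨hTU, hTfree⟩ := hT𝒯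
  have hQc : ∀ q ∈ Q, (q \ T).Nonempty := fun q hq => sdiff_nonempty.mpr (hTfree q hq)
  by_cases hall : ∀ p ∈ P, (p ∩ T).Nonempty
  · exact ⟨T, hTU, ∅, by simp, hQc, fun p hp => Or.inr (hall p hp)⟩
  · push_neg at hall
    obtain ⟨p0, hp0P, hp0T⟩ := hall
    have hp0T' : p0 ∩ T = ∅ := hp0T
    obtain ⟨t, ht⟩ := hPne p0 hp0P
    have htT : t ∉ T := by
      intro htT
      have : t ∈ p0 ∩ T := mem_inter.mpr ⟨ht, htT⟩
      rw [hp0T'] at this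
      exact notMem_empty t this
    -- `insert t T` is not Q-free by maximality
    have hnotfree : ∃ q ∈ Q, q ⊆ insert t T := by
      by_contra hc
      push_neg at hc
      have hmem : insert t T ∈ U.powerset.filter (fun T => ∀ q ∈ Q, ¬ q ⊆ T) := by
        rw [mem_filter, mem_powerset]
        exact ⟨insert_subset (hPU p0 hp0P ht) hTU, hc⟩
      have := hTmax _ hmem
      rw [card_insert_of_notMem htT] at this
      omega
    obtain ⟨q0, hq0Q, hq0sub⟩ := hnotfree
    refine ⟨T, hTU, {t}, by simp, hQc, ?_⟩
    intro p hpP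
    by_cases hpT : (p ∩ T).Nonempty
    · exact Or.inr hpT
    · have hpT' : p ∩ T = ∅ := not_nonempty_iff_eq_empty.mp hpT
      obtain ⟨x, hx⟩ := not_disjoint_iff_nonempty_inter.mp (cross p hpP q0 hq0Q)
      rw [mem_inter] at hx
      have : x ∈ insert t T := hq0sub hx.2
      rw [mem_insert] at this
      rcases this with rfl | hxT
      · exact Or.inl ⟨x, mem_inter.mpr ⟨hx.1, mem_singleton_self x⟩⟩
      · exfalso
        have : x ∈ p ∩ T := mem_inter.mpr ⟨hx.1, hxT⟩
        rw [hpT'] at this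
        exact notMem_empty x this

theorem stmt7 {α : Type*} [DecidableEq α] (𝓕 : Finset (Finset α))
    (hne : ∀ F ∈ 𝓕, F.Nonempty)
    (h : ∀ A ∈ 𝓕, ∀ B ∈ 𝓕, A ≠ B →
      ∀ C ∈ 𝓕, ∀ D ∈ 𝓕,
        Disjoint C A → Disjoint C B → Disjoint D A → Disjoint D B → C = D) :
    cdTwo 𝓕 ≤ 3 := by
  classical
  have key : ∃ (Y : Finset α) (c : α → Fin 2), Y.card ≤ 3 ∧
      ∀ F ∈ 𝓕, Disjoint F Y → (∃ a ∈ F, c a = 0) ∧ (∃ b ∈ F, c b = 1) := by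
    rcases 𝓕.eq_empty_or_nonempty with h𝓕 | h𝓕
    · refine ⟨∅, fun _ => 0, by simp, ?_⟩
      intro F hF
      rw [h𝓕] at hF
      exact absurd hF (notMem_empty F)
    · obtain ⟨A, hA𝓕, hAmin⟩ := 𝓕.exists_min_image card h𝓕
      obtain ⟨a0, ha0⟩ := hne A hA𝓕
      by_cases hNA : ∃ B ∈ 𝓕, Disjoint B A
      · -- there is a set disjoint from A
        obtain ⟨B0, hB0𝓕, hB0A⟩ := hNA
        obtain ⟨B, hBNA, hBmin⟩ :=
          (𝓕.filter (fun X => Disjoint X A)).exists_min_image card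
            ⟨B0, mem_filter.mpr ⟨hB0𝓕, hB0A⟩⟩
        rw [mem_filter] at hBNA
        obtain ⟨hB𝓕, hBA⟩ := hBNA
        obtain ⟨b0, hb0⟩ := hne B hB𝓕
        have hAB : Disjoint A B := hBA.symm
        -- traces
        have htrP : ∀ X ∈ 𝓕, X ≠ A → Disjoint X B → (X \ (A ∪ B)).Nonempty := by
          intro X hX hXA hXB
          rw [sdiff_nonempty]
          intro hsub
          have hXsubA : X ⊆ A := by
            intro x hx
            rcases mem_union.mp (hsub hx) with hxA | hxB
            · exact hxA
            · exact absurd hxB (disjoint_left.mp hXB hx)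
          exact hXA (eq_of_subset_of_card_le hXsubA (hAmin X hX))
        have htrQ : ∀ X ∈ 𝓕, X ≠ B → Disjoint X A → (X \ (A ∪ B)).Nonempty := by
          intro X hX hXB hXA
          rw [sdiff_nonempty]
          intro hsub
          have hXsubB : X ⊆ B := by
            intro x hx
            rcases mem_union.mp (hsub hx) with hxA | hxB
            · exact absurd hxA (disjoint_left.mp hXA hx)
            · exact hxB
          have := hBmin X (mem_filter.mpr ⟨hX, hXA⟩)
          exact hXB (eq_of_subset_of_card_le hXsubB this)
        set U : Finset α := (𝓕.biUnion id) \ (A ∪ B) with hU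
        set Zc : Finset (Finset α) := 𝓕.filter (fun X => X ≠ A ∧ Disjoint X B) with hZc
        set Wc : Finset (Finset α) := 𝓕.filter (fun X => X ≠ B ∧ Disjoint X A) with hWc
        set P : Finset (Finset α) := Zc.image (fun X => X \ (A ∪ B)) with hP
        set Q : Finset (Finset α) := Wc.image (fun X => X \ (A ∪ B)) with hQ
        have hPU : ∀ p ∈ P, p ⊆ U := by
          intro p hp
          obtain ⟨X, hX, rfl⟩ := mem_image.mp hp
          rw [mem_filter] at hX
          exact sdiff_subset_sdiff (fun x hx => mem_biUnion.mpr ⟨X, hX.1, hx⟩)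
            (Subset.refl _)
        have hPne : ∀ p ∈ P, p.Nonempty := by
          intro p hp
          obtain ⟨X, hX, rfl⟩ := mem_image.mp hp
          rw [mem_filter] at hX
          exact htrP X hX.1 hX.2.1 hX.2.2
        have hQne : ∀ q ∈ Q, q.Nonempty := by
          intro q hq
          obtain ⟨X, hX, rfl⟩ := mem_image.mp hq
          rw [mem_filter] at hX
          exact htrQ X hX.1 hX.2.1 hX.2.2
        have cross : ∀ p ∈ P, ∀ q ∈ Q, ¬ Disjoint p q := by
          intro p hp q hq
          obtain ⟨X, hX, rfl⟩ := mem_image.mp hp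
          obtain ⟨W, hW, rfl⟩ := mem_image.mp hq
          rw [mem_filter] at hX hW
          obtain ⟨hX𝓕, hXA, hXB⟩ := hX
          obtain ⟨hW𝓕, hWB, hWA⟩ := hW
          -- first: X and W intersect
          have hXW : ¬ Disjoint X W := by
            intro hd
            have := h A hA𝓕 X hX𝓕 (Ne.symm hXA) B hB𝓕 W hW𝓕 hBA hXB.symm hWA hd.symm
            exact hWB this.symm
          obtain ⟨x, hx⟩ := not_disjoint_iff_nonempty_inter.mp hXW
          rw [mem_inter] at hx
          refine not_disjoint_iff_nonempty_inter.mpr ⟨x, mem_inter.mpr ⟨?_, ?_⟩⟩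
          · rw [mem_sdiff, mem_union]
            exact ⟨hx.1, fun hc => hc.elim
              (fun hxA => disjoint_left.mp hWA hx.2 hxA)
              (fun hxB => disjoint_left.mp hXB hx.1 hxB)⟩
          · rw [mem_sdiff, mem_union]
            exact ⟨hx.2, fun hc => hc.elim
              (fun hxA => disjoint_left.mp hWA hx.2 hxA)
              (fun hxB => disjoint_left.mp hXB hx.1 hxB)⟩
        obtain ⟨T, hTU, s, hscard, hQc, hPc⟩ := coreLemma U P Q hPU hPne hQne cross
        have hTA : ∀ x ∈ A, x ∉ T := by
          intro x hx hxT
          have := hTU hxT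
          rw [hU, mem_sdiff] at this
          exact this.2 (mem_union_left _ hx)
        refine ⟨insert a0 (insert b0 s), fun a => if a ∈ B ∨ a ∈ T then 1 else 0, ?_, ?_⟩
        · calc (insert a0 (insert b0 s)).card
              ≤ (insert b0 s).card + 1 := card_insert_le _ _
            _ ≤ (s.card + 1) + 1 := by
                have := card_insert_le b0 s
                omega
            _ ≤ 3 := by omega
        · intro F hF hFY
          have ha0F : a0 ∉ F := disjoint_right.mp hFY (mem_insert_self _ _)
          have hb0F : b0 ∉ F :=
            disjoint_right.mp hFY (mem_insert_of_mem (mem_insert_self _ _))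
          have hsF : Disjoint F s :=
            hFY.mono_right (fun x hx => mem_insert_of_mem (mem_insert_of_mem hx))
          -- helper: a point of F in the trace, outside T, is colored 0
          have redOfTrace : ∀ x, x ∈ F \ (A ∪ B) → x ∉ T →
              (if x ∈ B ∨ x ∈ T then (1 : Fin 2) else 0) = 0 := by
            intro x hx hxT
            rw [mem_sdiff, mem_union] at hx
            rw [if_neg]
            push_neg
            exact ⟨fun hxB => hx.2 (Or.inr hxB), hxT⟩
          -- helper: blue point from membership in Zc via hPc
          have blueOfZc : F ∈ Zc → ∃ b ∈ F,
              (if b ∈ B ∨ b ∈ T then (1 : Fin 2) else 0) = 1 := by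
            intro hFZc
            have hmem : F \ (A ∪ B) ∈ P := mem_image_of_mem _ hFZc
            rcases hPc _ hmem with hcase | hcase
            · exfalso
              obtain ⟨y, hy⟩ := hcase
              rw [mem_inter, mem_sdiff] at hy
              exact disjoint_left.mp hsF hy.1.1 hy.2
            · obtain ⟨y, hy⟩ := hcase
              rw [mem_inter, mem_sdiff] at hy
              exact ⟨y, hy.1.1, if_pos (Or.inr hy.2)⟩
          -- helper: red point from membership in Wc via hQc
          have redOfWc : F ∈ Wc → ∃ a ∈ F,
              (if a ∈ B ∨ a ∈ T then (1 : Fin 2) else 0) = 0 := by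
            intro hFWc
            have hmem : F \ (A ∪ B) ∈ Q := mem_image_of_mem _ hFWc
            obtain ⟨y, hy⟩ := hQc _ hmem
            rw [mem_sdiff] at hy
            refine ⟨y, (mem_sdiff.mp hy.1).1, redOfTrace y hy.1 hy.2⟩
          by_cases hFA : Disjoint F A
          · -- F is disjoint from A; F ≠ B since b0 ∉ F
            have hFB' : F ≠ B := fun e => hb0F (e ▸ hb0)
            have hFWc : F ∈ Wc := by
              rw [hWc, mem_filter]; exact ⟨hF, hFB', hFA⟩
            refine ⟨redOfWc hFWc, ?_⟩
            by_cases hFB : Disjoint F B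
            · -- F disjoint from both: also in Zc
              have hFA' : F ≠ A := fun e => ha0F (e ▸ ha0)
              have hFZc : F ∈ Zc := by
                rw [hZc, mem_filter]; exact ⟨hF, hFA', hFB⟩
              exact blueOfZc hFZc
            · obtain ⟨y, hy⟩ := not_disjoint_iff_nonempty_inter.mp hFB
              rw [mem_inter] at hy
              exact ⟨y, hy.1, if_pos (Or.inl hy.2)⟩
          · -- F meets A: red point from F ∩ A
            obtain ⟨x, hx⟩ := not_disjoint_iff_nonempty_inter.mp hFA
            rw [mem_inter] at hx
            have hred : (if x ∈ B ∨ x ∈ T then (1 : Fin 2) else 0) = 0 := by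
              rw [if_neg]
              push_neg
              exact ⟨fun hxB => disjoint_left.mp hAB hx.2 hxB, hTA x hx.2⟩
            refine ⟨⟨x, hx.1, hred⟩, ?_⟩
            by_cases hFB : Disjoint F B
            · have hFA' : F ≠ A := fun e => ha0F (e ▸ ha0)
              have hFZc : F ∈ Zc := by
                rw [hZc, mem_filter]; exact ⟨hF, hFA', hFB⟩
              exact blueOfZc hFZc
            · obtain ⟨y, hy⟩ := not_disjoint_iff_nonempty_inter.mp hFB
              rw [mem_inter] at hy
              exact ⟨y, hy.1, if_pos (Or.inl hy.2)⟩
      · -- nothing in 𝓕 is disjoint from A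
        push_neg at hNA
        refine ⟨{a0}, fun a => if a ∈ A then 0 else 1, by simp, ?_⟩
        intro F hF hFY
        have ha0F : a0 ∉ F := disjoint_right.mp hFY (mem_singleton_self a0)
        have hFA : ¬ Disjoint F A := hNA F hF
        obtain ⟨x, hx⟩ := not_disjoint_iff_nonempty_inter.mp hFA
        rw [mem_inter] at hx
        constructor
        · exact ⟨x, hx.1, if_pos hx.2⟩
        · have hFnA : ¬ F ⊆ A := by
            intro hsub
            have hFA' : F = A := eq_of_subset_of_card_le hsub (hAmin F hF)
            exact ha0F (hFA' ▸ ha0)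
          obtain ⟨y, hyF, hyA⟩ := not_subset.mp hFnA
          exact ⟨y, hyF, if_neg hyA⟩
  obtain ⟨Y, c, hY3, hYc⟩ := key
  have hmem : Y.card ∈ {k | ∃ Y : Finset α, Y.card = k ∧ ∃ c : α → Fin 2,
      ∀ F ∈ 𝓕, Disjoint F Y → (∃ a ∈ F, c a = 0) ∧ (∃ b ∈ F, c b = 1)} :=
    ⟨Y, rfl, c, hYc⟩
  exact le_trans (Nat.sInf_le hmem) hY3
end

section
/- If F is a finite family of nonempty sets whose general Kneser graph KG(F) contains no K_{2,2} subgraph (i.e., there do not exist distinct A, B ∈ F and distinct C, D ∈ F with A, B each disjoint from both C and D), then cd_2(F) ≤ 3. -/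
open Finset

theorem stmt8 {α : Type*} [DecidableEq α] (𝓕 : Finset (Finset α))
    (hne : ∀ F ∈ 𝓕, F.Nonempty)
    (h : ∀ A ∈ 𝓕, ∀ B ∈ 𝓕, ∀ C ∈ 𝓕, ∀ D ∈ 𝓕,
      A ≠ B → C ≠ D → Disjoint A C → Disjoint A D → Disjoint B C →
        Disjoint B D → False) :
    cdTwo 𝓕 ≤ 3 := by
  classical
  have key : ∃ (Y : Finset α) (c : α → Fin 2), Y.card ≤ 3 ∧
      ∀ F ∈ 𝓕, Disjoint F Y → (∃ a ∈ F, c a = 0) ∧ (∃ b ∈ F, c b = 1) := by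
    by_cases hedge : ∃ X ∈ 𝓕, ∃ Z ∈ 𝓕, X ≠ Z ∧ Disjoint X Z
    · -- Case: the Kneser graph has an edge
      obtain ⟨X, hX, Z, hZ, hXZ, hdXZ⟩ := hedge
      -- A₀ : inclusion-minimal member of 𝓕 below X
      obtain ⟨A₀, hA₀S, hA₀min⟩ := Finset.exists_min_image
        (𝓕.filter (· ⊆ X)) Finset.card ⟨X, Finset.mem_filter.mpr ⟨hX, le_refl X⟩⟩
      rw [Finset.mem_filter] at hA₀S
      obtain ⟨hA₀F, hA₀X⟩ := hA₀S
      have hAmin : ∀ F ∈ 𝓕, F ⊆ A₀ → F = A₀ := by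
        intro F hF hsub
        exact Finset.eq_of_subset_of_card_le hsub
          (hA₀min F (Finset.mem_filter.mpr ⟨hF, hsub.trans hA₀X⟩))
      -- B₀ : minimum-cardinality neighbor of A₀
      obtain ⟨B₀, hB₀S, hB₀min⟩ := Finset.exists_min_image
        (𝓕.filter (fun F => Disjoint F A₀)) Finset.card
        ⟨Z, Finset.mem_filter.mpr ⟨hZ, (hdXZ.mono_left hA₀X).symm⟩⟩
      rw [Finset.mem_filter] at hB₀S
      obtain ⟨hB₀F, hB₀A⟩ := hB₀S
      have hBmin : ∀ F ∈ 𝓕, F ⊆ B₀ → F = B₀ := by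
        intro F hF hsub
        exact Finset.eq_of_subset_of_card_le hsub
          (hB₀min F (Finset.mem_filter.mpr ⟨hF, hB₀A.mono_left hsub⟩))
      obtain ⟨a, ha⟩ := hne A₀ hA₀F
      obtain ⟨b, hb⟩ := hne B₀ hB₀F
      by_cases hB : (𝓕.filter (fun F => Disjoint F B₀ ∧ F ≠ A₀)).Nonempty
      · -- there is a set disjoint from B₀ other than A₀
        obtain ⟨T₀, hT₀mem, hT₀min⟩ := Finset.exists_min_image
          ((𝓕.filter (fun F => Disjoint F B₀ ∧ F ≠ A₀)).image
            (fun F => F \ (A₀ ∪ B₀))) Finset.card (hB.image _)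
        obtain ⟨F₀, hF₀mem, hF₀T⟩ := Finset.mem_image.mp hT₀mem
        rw [Finset.mem_filter] at hF₀mem
        obtain ⟨hF₀F, hF₀B, hF₀A⟩ := hF₀mem
        -- T₀ is nonempty
        have hT₀ne : T₀.Nonempty := by
          rw [Finset.nonempty_iff_ne_empty]
          intro hcon
          rw [hcon] at hF₀T
          have hsub : F₀ ⊆ A₀ ∪ B₀ := by
            rwa [← Finset.sdiff_eq_empty_iff_subset]
          have hsubA : F₀ ⊆ A₀ := by
            intro x hx
            rcases Finset.mem_union.mp (hsub hx) with h1 | h1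
            · exact h1
            · exact absurd h1 (Finset.disjoint_left.mp hF₀B hx)
          exact hF₀A (hAmin F₀ hF₀F hsubA)
        obtain ⟨p, hp⟩ := hT₀ne
        -- F₀ ⊆ A₀ ∪ T₀
        have hF₀sub : F₀ ⊆ A₀ ∪ T₀ := by
          intro x hx
          by_cases hxA : x ∈ A₀
          · exact Finset.mem_union_left _ hxA
          · refine Finset.mem_union_right _ ?_
            rw [← hF₀T, Finset.mem_sdiff, Finset.mem_union]
            exact ⟨hx, fun hc => hc.elim hxA
              (fun hxB => Finset.disjoint_left.mp hF₀B hx hxB)⟩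
        refine ⟨{a, b, p}, fun x => if x ∈ A₀ ∪ T₀ then 0 else 1, ?_, ?_⟩
        · calc ({a, b, p} : Finset α).card
              ≤ ({b, p} : Finset α).card + 1 := Finset.card_insert_le _ _
            _ ≤ (({p} : Finset α).card + 1) + 1 := by
                exact Nat.add_le_add_right (Finset.card_insert_le _ _) 1
            _ ≤ 3 := by simp
        · intro F hF hdis
          have haF : a ∉ F := fun hc =>
            Finset.disjoint_left.mp hdis hc (by simp)
          have hbF : b ∉ F := fun hc =>
            Finset.disjoint_left.mp hdis hc (by simp)
          have hpF : p ∉ F := fun hc =>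
            Finset.disjoint_left.mp hdis hc (by simp)
          constructor
          · -- F has a red point
            by_contra hcon
            push_neg at hcon
            have hFdis : Disjoint F (A₀ ∪ T₀) := by
              rw [Finset.disjoint_left]
              intro x hx hxU
              have := hcon x hx
              rw [if_pos hxU] at this
              exact this rfl
            have hFA : Disjoint A₀ F := (Finset.disjoint_union_right.mp hFdis).1.symm
            have hFneB : F ≠ B₀ := fun hc => hbF (hc ▸ hb)
            have hF₀dF : Disjoint F₀ F :=
              (hFdis.mono_right hF₀sub).symm
            exact h A₀ hA₀F F₀ hF₀F B₀ hB₀F F hF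
              (fun hc => hF₀A hc.symm) (fun hc => hFneB hc.symm)
              hB₀A.symm hFA hF₀B hF₀dF
          · -- F has a blue point
            by_contra hcon
            push_neg at hcon
            have hFsub : F ⊆ A₀ ∪ T₀ := by
              intro x hx
              by_contra hxU
              have := hcon x hx
              rw [if_neg hxU] at this
              exact this rfl
            have hT₀B : Disjoint T₀ B₀ := by
              rw [Finset.disjoint_left]
              intro x hx hxB
              rw [← hF₀T, Finset.mem_sdiff, Finset.mem_union] at hx
              exact hx.2 (Or.inr hxB)
            have hFB : Disjoint F B₀ := by
              refine Finset.disjoint_left.mpr fun x hx hxB => ?_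
              rcases Finset.mem_union.mp (hFsub hx) with h1 | h1
              · exact Finset.disjoint_left.mp hB₀A.symm h1 hxB
              · exact Finset.disjoint_left.mp hT₀B h1 hxB
            have hFneA : F ≠ A₀ := fun hc => haF (hc ▸ ha)
            have hFmem : F \ (A₀ ∪ B₀) ∈
                (𝓕.filter (fun F => Disjoint F B₀ ∧ F ≠ A₀)).image
                  (fun F => F \ (A₀ ∪ B₀)) :=
              Finset.mem_image_of_mem _ (Finset.mem_filter.mpr ⟨hF, hFB, hFneA⟩)
            have htrsub : F \ (A₀ ∪ B₀) ⊆ T₀ := by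
              intro x hx
              rw [Finset.mem_sdiff, Finset.mem_union] at hx
              rcases Finset.mem_union.mp (hFsub hx.1) with h1 | h1
              · exact absurd (Or.inl h1) hx.2
              · exact h1
            have htreq : F \ (A₀ ∪ B₀) = T₀ :=
              Finset.eq_of_subset_of_card_le htrsub (hT₀min _ hFmem)
            have : p ∈ F := by
              have := htreq ▸ hp
              exact (Finset.mem_sdiff.mp this).1
            exact hpF this
      · -- A₀ is the only set disjoint from B₀
        refine ⟨{a, b}, fun x => if x ∈ B₀ then 1 else 0, ?_, ?_⟩
        · calc ({a, b} : Finset α).card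
              ≤ ({b} : Finset α).card + 1 := Finset.card_insert_le _ _
            _ ≤ 3 := by simp
        · intro F hF hdis
          have haF : a ∉ F := fun hc =>
            Finset.disjoint_left.mp hdis hc (by simp)
          have hbF : b ∉ F := fun hc =>
            Finset.disjoint_left.mp hdis hc (by simp)
          constructor
          · -- red point : a point outside B₀
            by_contra hcon
            push_neg at hcon
            have hFsub : F ⊆ B₀ := by
              intro x hx
              by_contra hxB
              have := hcon x hx
              rw [if_neg hxB] at this
              exact this rfl
            exact hbF ((hBmin F hF hFsub) ▸ hb)
          · -- blue point : a point of B₀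
            by_contra hcon
            push_neg at hcon
            have hFB : Disjoint F B₀ := by
              refine Finset.disjoint_left.mpr fun x hx hxB => ?_
              have := hcon x hx
              rw [if_pos hxB] at this
              exact this rfl
            have hFneA : F ≠ A₀ := fun hc => haF (hc ▸ ha)
            exact hB ⟨F, Finset.mem_filter.mpr ⟨hF, hFB, hFneA⟩⟩
    · -- Case: no edge (intersecting family)
      push_neg at hedge
      by_cases hFne : 𝓕.Nonempty
      · obtain ⟨A₀, hA₀F, hA₀min⟩ := Finset.exists_min_image 𝓕 Finset.card hFne
        have hAmin : ∀ F ∈ 𝓕, F ⊆ A₀ → F = A₀ := fun F hF hsub =>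
          Finset.eq_of_subset_of_card_le hsub (hA₀min F hF)
        obtain ⟨p, hp⟩ := hne A₀ hA₀F
        refine ⟨{p}, fun x => if x ∈ A₀ then 0 else 1, by simp, ?_⟩
        intro F hF hdis
        have hpF : p ∉ F := fun hc =>
          Finset.disjoint_left.mp hdis hc (by simp)
        have hFneA : F ≠ A₀ := fun hc => hpF (hc ▸ hp)
        constructor
        · by_contra hcon
          push_neg at hcon
          have hFA : Disjoint F A₀ := by
            refine Finset.disjoint_left.mpr fun x hx hxA => ?_
            have := hcon x hx
            rw [if_pos hxA] at this
            exact this rfl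
          exact hedge F hF A₀ hA₀F hFneA hFA
        · by_contra hcon
          push_neg at hcon
          have hFsub : F ⊆ A₀ := by
            intro x hx
            by_contra hxA
            have := hcon x hx
            rw [if_neg hxA] at this
            exact this rfl
          exact hFneA (hAmin F hF hFsub)
      · refine ⟨∅, fun _ => 0, by simp, ?_⟩
        intro F hF
        exact absurd ⟨F, hF⟩ hFne
  obtain ⟨Y, c, hY3, hc⟩ := key
  rw [cdTwo]
  exact le_trans (Nat.sInf_le ⟨Y, rfl, c, hc⟩) hY3
end
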